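/- If {(A^j, B^j)}_{j=1}^s is a biclique cover of the complement of the subgraph of G induced by A ∪ C, {(A'^j, B'^j)}_{j=1}^r is a biclique cover of the complement of the subgraph of G induced by B ∪ C, and (A, B, C) partitions the vertices of G with no G-edge between A and B, then these two families together with the pair (A, B) form a biclique cover of the complement graph Gᶜ. -/

import Mathlib

/-- A family of pairs of vertex sets is a biclique cover for the adjacency relation
`Adj`: each pair consists of disjoint sets all of whose cross pairs satisfy `Adj`, and
every pair `u, v` with `Adj u v` is a cross pair of some member. -/
def IsBicliqueCoverRel {J : Type*} (Adj : J → J → Prop) (F : List (Set J × Set J)) : Prop :=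
  (∀ p ∈ F, Disjoint p.1 p.2 ∧ ∀ a ∈ p.1, ∀ b ∈ p.2, Adj a b) ∧
  (∀ u v : J, Adj u v → ∃ p ∈ F, (u ∈ p.1 ∧ v ∈ p.2) ∨ (v ∈ p.1 ∧ u ∈ p.2))

/-- Adjacency of the complement of the subgraph of `G` induced by `S`. -/
def inducedComplAdj {J : Type*} (G : SimpleGraph J) (S : Set J) (u v : J) : Prop :=
  u ∈ S ∧ v ∈ S ∧ u ≠ v ∧ ¬ G.Adj u v

/-- If `(A,B,C)` partitions the vertex set of `G` with `A`, `B` nonempty and no edge of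
`G` between `A` and `B`, and `F1`, `F2` are biclique covers of the complements of the
subgraphs of `G` induced by `A ∪ C` and `B ∪ C` respectively, then `F1`, `F2` together
with the pair `(A, B)` form a biclique cover of the complement graph `Gᶜ`. -/
theorem divide_and_conquer_biclique_cover {J : Type*} [Fintype J] (G : SimpleGraph J)
    (A B C : Set J)
    (hpart : A ∪ B ∪ C = Set.univ)
    (hAB : Disjoint A B) (hAC : Disjoint A C) (hBC : Disjoint B C)
    (hA : A.Nonempty) (hB : B.Nonempty)
    (hnoedge : ∀ a ∈ A, ∀ b ∈ B, ¬ G.Adj a b)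
    (F1 F2 : List (Set J × Set J))
    (h1 : IsBicliqueCoverRel (inducedComplAdj G (A ∪ C)) F1)
    (h2 : IsBicliqueCoverRel (inducedComplAdj G (B ∪ C)) F2) :
    IsBicliqueCoverRel Gᶜ.Adj ((A, B) :: (F1 ++ F2)) := by
  obtain ⟨h1b, h1c⟩ := h1
  obtain ⟨h2b, h2c⟩ := h2
  constructor
  · intro p hp
    rcases List.mem_cons.1 hp with rfl | hp
    · refine ⟨hAB, fun a ha b hb => ?_⟩
      refine ⟨fun hab => hAB.ne_of_mem ha hb hab, hnoedge a ha b hb⟩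
    · rcases List.mem_append.1 hp with hp | hp
      · obtain ⟨hd, hc⟩ := h1b p hp
        exact ⟨hd, fun a ha b hb => by
          obtain ⟨_, _, hne, hna⟩ := hc a ha b hb; exact ⟨hne, hna⟩⟩
      · obtain ⟨hd, hc⟩ := h2b p hp
        exact ⟨hd, fun a ha b hb => by
          obtain ⟨_, _, hne, hna⟩ := hc a ha b hb; exact ⟨hne, hna⟩⟩
  · intro u v huv
    obtain ⟨hne, hna⟩ := huv
    have hu : u ∈ A ∪ B ∪ C := hpart ▸ Set.mem_univ u
    have hv : v ∈ A ∪ B ∪ C := hpart ▸ Set.mem_univ v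
    have key : ∀ x y : J, x ∈ A ∪ B ∪ C → y ∈ A ∪ B ∪ C → x ≠ y → ¬ G.Adj x y →
        ∃ p ∈ (A, B) :: (F1 ++ F2), (x ∈ p.1 ∧ y ∈ p.2) ∨ (y ∈ p.1 ∧ x ∈ p.2) := by
      intro x y hx hy hxy hnxy
      have case1 : x ∈ A ∪ C → y ∈ A ∪ C →
          ∃ p ∈ (A, B) :: (F1 ++ F2), (x ∈ p.1 ∧ y ∈ p.2) ∨ (y ∈ p.1 ∧ x ∈ p.2) := by
        intro hx' hy'
        obtain ⟨p, hp, hmem⟩ := h1c x y ⟨hx', hy', hxy, hnxy⟩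
        exact ⟨p, List.mem_cons_of_mem _ (List.mem_append_left _ hp), hmem⟩
      have case2 : x ∈ B ∪ C → y ∈ B ∪ C →
          ∃ p ∈ (A, B) :: (F1 ++ F2), (x ∈ p.1 ∧ y ∈ p.2) ∨ (y ∈ p.1 ∧ x ∈ p.2) := by
        intro hx' hy'
        obtain ⟨p, hp, hmem⟩ := h2c x y ⟨hx', hy', hxy, hnxy⟩
        exact ⟨p, List.mem_cons_of_mem _ (List.mem_append_right _ hp), hmem⟩
      rcases hx with (hxA | hxB) | hxC
      · rcases hy with (hyA | hyB) | hyC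
        · exact case1 (Or.inl hxA) (Or.inl hyA)
        · exact ⟨(A, B), List.mem_cons_self, Or.inl ⟨hxA, hyB⟩⟩
        · exact case1 (Or.inl hxA) (Or.inr hyC)
      · rcases hy with (hyA | hyB) | hyC
        · exact ⟨(A, B), List.mem_cons_self, Or.inr ⟨hyA, hxB⟩⟩
        · exact case2 (Or.inl hxB) (Or.inl hyB)
        · exact case2 (Or.inl hxB) (Or.inr hyC)
      · rcases hy with (hyA | hyB) | hyC
        · exact case1 (Or.inr hxC) (Or.inl hyA)
        · exact case2 (Or.inr hxC) (Or.inl hyB)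
        · exact case1 (Or.inr hxC) (Or.inr hyC)
    exact key u v hu hv hne hna
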